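/- For p ∈ (0,1) and integer T ≥ 2, define A(T-1) = (1-r)·∑_{i=1}^{T-2}(1-p)^i + (1-p-p·r)·(1-p)^{T-2} + (1-2p)·r·∑_{i=1}^{T-2}(1-p)^{i-1}. Then 1 + A(T-1) = 1 + (1-p-p·r)·∑_{i=1}^{T-1}(1-p)^{i-1}, and consequently 1 + A(T-1) ≥ 0 if and only if r ≤ (1-(1-p)^T)/(p·(1-(1-p)^{T-1})). -/

import Mathlib

theorem first_round_coeff (p r : ℝ) (hp : 0 < p) (hp1 : p < 1) (T : ℕ) (hT : 2 ≤ T) :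
    (1 + ((1 - r) * (∑ i ∈ Finset.Icc 1 (T - 2), (1 - p) ^ i)
          + (1 - p - p * r) * (1 - p) ^ (T - 2)
          + (1 - 2 * p) * r * (∑ i ∈ Finset.Icc 1 (T - 2), (1 - p) ^ (i - 1)))
        = 1 + (1 - p - p * r) * (∑ i ∈ Finset.Icc 1 (T - 1), (1 - p) ^ (i - 1)))
    ∧ (0 ≤ 1 + ((1 - r) * (∑ i ∈ Finset.Icc 1 (T - 2), (1 - p) ^ i)
          + (1 - p - p * r) * (1 - p) ^ (T - 2)
          + (1 - 2 * p) * r * (∑ i ∈ Finset.Icc 1 (T - 2), (1 - p) ^ (i - 1)))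
        ↔ r ≤ (1 - (1 - p) ^ T) / (p * (1 - (1 - p) ^ (T - 1)))) := by
  obtain ⟨n, rfl⟩ : ∃ n, T = n + 2 := ⟨T - 2, by omega⟩
  have e2 : n + 2 - 2 = n := by omega
  have e1 : n + 2 - 1 = n + 1 := by omega
  rw [e1, e2]
  have h2 : (∑ i ∈ Finset.Icc 1 n, (1 - p) ^ (i - 1))
      = ∑ i ∈ Finset.range n, (1 - p) ^ i := by
    rw [show Finset.Icc 1 n = Finset.Ico 1 (n + 1) by rw [Finset.Ico_add_one_right_eq_Icc],
      Finset.sum_Ico_eq_sum_range]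
    simp
  have h3 : (∑ i ∈ Finset.Icc 1 (n + 1), (1 - p) ^ (i - 1))
      = ∑ i ∈ Finset.range (n + 1), (1 - p) ^ i := by
    rw [show Finset.Icc 1 (n + 1) = Finset.Ico 1 (n + 2) by exact (Finset.Ico_add_one_right_eq_Icc (a := 1) (b := n + 1)).symm,
      Finset.sum_Ico_eq_sum_range]
    simp
  have h1 : (∑ i ∈ Finset.Icc 1 n, (1 - p) ^ i)
      = (1 - p) * ∑ i ∈ Finset.range n, (1 - p) ^ i := by
    rw [show Finset.Icc 1 n = Finset.Ico 1 (n + 1) by rw [Finset.Ico_add_one_right_eq_Icc],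
      Finset.sum_Ico_eq_sum_range, Finset.mul_sum]
    apply Finset.sum_congr rfl
    intro i _
    rw [← pow_succ']
    congr 1
    omega
  rw [h1, h2, h3, Finset.sum_range_succ]
  set g := ∑ i ∈ Finset.range n, (1 - p) ^ i with hg
  have key : p * g = 1 - (1 - p) ^ n := by
    have := geom_sum_mul (1 - p) n
    rw [← hg] at this
    nlinarith [this]
  have hq0 : (0 : ℝ) < 1 - p := by linarith
  have hqn1 : (1 - p) ^ (n + 1) < 1 := pow_lt_one₀ (le_of_lt hq0) (by linarith) (by omega)
  have hd : 0 < 1 - (1 - p) ^ (n + 1) := by linarith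
  constructor
  · ring
  · rw [le_div_iff₀ (mul_pos hp hd)]
    have hE : p * (1 + ((1 - r) * ((1 - p) * g) + (1 - p - p * r) * (1 - p) ^ n
          + (1 - 2 * p) * r * g))
        = (1 - (1 - p) ^ (n + 2)) - r * (p * (1 - (1 - p) ^ (n + 1))) := by
      have hpow2 : (1 - p) ^ (n + 2) = (1 - p) ^ n * (1 - p) * (1 - p) := by ring
      have hpow1 : (1 - p) ^ (n + 1) = (1 - p) ^ n * (1 - p) := by ring
      rw [hpow1, hpow2]
      linear_combination (1 - p - p * r) * key
    constructor
    · intro h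
      nlinarith [mul_nonneg hp.le h, hE]
    · intro h
      have hPE : 0 ≤ p * (1 + ((1 - r) * ((1 - p) * g) + (1 - p - p * r) * (1 - p) ^ n
          + (1 - 2 * p) * r * g)) := by rw [hE]; linarith
      nlinarith [hPE, hp]
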